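/- Let n be an odd positive integer and let α₁, α₂, α₃, α₄ be integers satisfying conditions (2.14). Define H : (ZMod n)⁴ → ZMod n by H(i,j,k,ℓ) = α₁·i + α₂·j + α₃·k + α₄·ℓ. Then H is a four-dimensional pandiagonal Latin cube: for every direction vector d = (d₁,d₂,d₃,d₄) with each dᵢ ∈ {−1,0,1} and d ≠ (0,0,0,0), and every point p ∈ (ZMod n)⁴, the map t ↦ H(p + t·d) is a bijection of ZMod n. -/

import Mathlib

/-- Conditions (2.14) on the parameters `α₁, α₂, α₃, α₄` of a linear hypercube modulo
`n`, with `B = α₁ + α₂ + α₃ + α₄`. -/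
def Cond214 (n : ℕ) (α₁ α₂ α₃ α₄ : ℤ) : Prop :=
  let a : Fin 4 → ℤ := ![α₁, α₂, α₃, α₄]
  let B : ℤ := α₁ + α₂ + α₃ + α₄
  (∀ m, Int.gcd (a m) n = 1) ∧
  (∀ m m', m ≠ m' → Int.gcd (a m + a m') n = 1) ∧
  (∀ m m', m ≠ m' → Int.gcd (a m - a m') n = 1) ∧
  Int.gcd B n = 1 ∧
  (∀ m, Int.gcd (B - a m) n = 1) ∧
  (∀ m, Int.gcd (B - 2 * a m) n = 1) ∧
  (∀ m m', m ≠ m' → Int.gcd (B - a m' - 2 * a m) n = 1) ∧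
  (∀ m m', m ≠ m' → Int.gcd (B - 2 * a m' - 2 * a m) n = 1)


private lemma gcd_neg_left (a b : ℤ) : Int.gcd (-a) b = Int.gcd a b := by
  simp [Int.gcd]

private lemma key214 (n : ℕ) (α₁ α₂ α₃ α₄ : ℤ) (h : Cond214 n α₁ α₂ α₃ α₄)
    (e₁ e₂ e₃ e₄ : ℤ)
    (he₁ : e₁ = -1 ∨ e₁ = 0 ∨ e₁ = 1) (he₂ : e₂ = -1 ∨ e₂ = 0 ∨ e₂ = 1)
    (he₃ : e₃ = -1 ∨ e₃ = 0 ∨ e₃ = 1) (he₄ : e₄ = -1 ∨ e₄ = 0 ∨ e₄ = 1)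
    (hne : ¬ (e₁ = 0 ∧ e₂ = 0 ∧ e₃ = 0 ∧ e₄ = 0)) :
    Int.gcd (α₁ * e₁ + α₂ * e₂ + α₃ * e₃ + α₄ * e₄) (n:ℤ) = 1 := by
  obtain ⟨h1, h2, h3, hB, h5, h6, h7, h8⟩ := h
  have f0 : Int.gcd (α₁) (n:ℤ) = 1 := h1 0
  have f1 : Int.gcd (α₂) (n:ℤ) = 1 := h1 1
  have f2 : Int.gcd (α₃) (n:ℤ) = 1 := h1 2
  have f3 : Int.gcd (α₄) (n:ℤ) = 1 := h1 3
  have f4 : Int.gcd (α₁ + α₂) (n:ℤ) = 1 := h2 0 1 (by decide)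
  have f5 : Int.gcd (α₁ + α₃) (n:ℤ) = 1 := h2 0 2 (by decide)
  have f6 : Int.gcd (α₁ + α₄) (n:ℤ) = 1 := h2 0 3 (by decide)
  have f7 : Int.gcd (α₂ + α₃) (n:ℤ) = 1 := h2 1 2 (by decide)
  have f8 : Int.gcd (α₂ + α₄) (n:ℤ) = 1 := h2 1 3 (by decide)
  have f9 : Int.gcd (α₃ + α₄) (n:ℤ) = 1 := h2 2 3 (by decide)
  have f10 : Int.gcd (α₁ - α₂) (n:ℤ) = 1 := h3 0 1 (by decide)
  have f11 : Int.gcd (α₁ - α₃) (n:ℤ) = 1 := h3 0 2 (by decide)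
  have f12 : Int.gcd (α₁ - α₄) (n:ℤ) = 1 := h3 0 3 (by decide)
  have f13 : Int.gcd (-α₁ + α₂) (n:ℤ) = 1 := by
    have h' : Int.gcd (α₂ - α₁) (n:ℤ) = 1 := h3 1 0 (by decide)
    rwa [show (α₂ - α₁:ℤ) = -α₁ + α₂ from by ring] at h'
  have f14 : Int.gcd (α₂ - α₃) (n:ℤ) = 1 := h3 1 2 (by decide)
  have f15 : Int.gcd (α₂ - α₄) (n:ℤ) = 1 := h3 1 3 (by decide)
  have f16 : Int.gcd (-α₁ + α₃) (n:ℤ) = 1 := by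
    have h' : Int.gcd (α₃ - α₁) (n:ℤ) = 1 := h3 2 0 (by decide)
    rwa [show (α₃ - α₁:ℤ) = -α₁ + α₃ from by ring] at h'
  have f17 : Int.gcd (-α₂ + α₃) (n:ℤ) = 1 := by
    have h' : Int.gcd (α₃ - α₂) (n:ℤ) = 1 := h3 2 1 (by decide)
    rwa [show (α₃ - α₂:ℤ) = -α₂ + α₃ from by ring] at h'
  have f18 : Int.gcd (α₃ - α₄) (n:ℤ) = 1 := h3 2 3 (by decide)
  have f19 : Int.gcd (-α₁ + α₄) (n:ℤ) = 1 := by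
    have h' : Int.gcd (α₄ - α₁) (n:ℤ) = 1 := h3 3 0 (by decide)
    rwa [show (α₄ - α₁:ℤ) = -α₁ + α₄ from by ring] at h'
  have f20 : Int.gcd (-α₂ + α₄) (n:ℤ) = 1 := by
    have h' : Int.gcd (α₄ - α₂) (n:ℤ) = 1 := h3 3 1 (by decide)
    rwa [show (α₄ - α₂:ℤ) = -α₂ + α₄ from by ring] at h'
  have f21 : Int.gcd (-α₃ + α₄) (n:ℤ) = 1 := by
    have h' : Int.gcd (α₄ - α₃) (n:ℤ) = 1 := h3 3 2 (by decide)
    rwa [show (α₄ - α₃:ℤ) = -α₃ + α₄ from by ring] at h'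
  have f22 : Int.gcd (α₁ + α₂ + α₃ + α₄) (n:ℤ) = 1 := hB
  have f23 : Int.gcd (α₂ + α₃ + α₄) (n:ℤ) = 1 := by
    have h' : Int.gcd (α₁ + α₂ + α₃ + α₄ - α₁) (n:ℤ) = 1 := h5 0
    rwa [show (α₁ + α₂ + α₃ + α₄ - α₁:ℤ) = α₂ + α₃ + α₄ from by ring] at h'
  have f24 : Int.gcd (α₁ + α₃ + α₄) (n:ℤ) = 1 := by
    have h' : Int.gcd (α₁ + α₂ + α₃ + α₄ - α₂) (n:ℤ) = 1 := h5 1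
    rwa [show (α₁ + α₂ + α₃ + α₄ - α₂:ℤ) = α₁ + α₃ + α₄ from by ring] at h'
  have f25 : Int.gcd (α₁ + α₂ + α₄) (n:ℤ) = 1 := by
    have h' : Int.gcd (α₁ + α₂ + α₃ + α₄ - α₃) (n:ℤ) = 1 := h5 2
    rwa [show (α₁ + α₂ + α₃ + α₄ - α₃:ℤ) = α₁ + α₂ + α₄ from by ring] at h'
  have f26 : Int.gcd (α₁ + α₂ + α₃) (n:ℤ) = 1 := by
    have h' : Int.gcd (α₁ + α₂ + α₃ + α₄ - α₄) (n:ℤ) = 1 := h5 3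
    rwa [show (α₁ + α₂ + α₃ + α₄ - α₄:ℤ) = α₁ + α₂ + α₃ from by ring] at h'
  have f27 : Int.gcd (-α₁ + α₂ + α₃ + α₄) (n:ℤ) = 1 := by
    have h' : Int.gcd (α₁ + α₂ + α₃ + α₄ - 2 * α₁) (n:ℤ) = 1 := h6 0
    rwa [show (α₁ + α₂ + α₃ + α₄ - 2 * α₁:ℤ) = -α₁ + α₂ + α₃ + α₄ from by ring] at h'
  have f28 : Int.gcd (α₁ - α₂ + α₃ + α₄) (n:ℤ) = 1 := by
    have h' : Int.gcd (α₁ + α₂ + α₃ + α₄ - 2 * α₂) (n:ℤ) = 1 := h6 1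
    rwa [show (α₁ + α₂ + α₃ + α₄ - 2 * α₂:ℤ) = α₁ - α₂ + α₃ + α₄ from by ring] at h'
  have f29 : Int.gcd (α₁ + α₂ - α₃ + α₄) (n:ℤ) = 1 := by
    have h' : Int.gcd (α₁ + α₂ + α₃ + α₄ - 2 * α₃) (n:ℤ) = 1 := h6 2
    rwa [show (α₁ + α₂ + α₃ + α₄ - 2 * α₃:ℤ) = α₁ + α₂ - α₃ + α₄ from by ring] at h'
  have f30 : Int.gcd (α₁ + α₂ + α₃ - α₄) (n:ℤ) = 1 := by
    have h' : Int.gcd (α₁ + α₂ + α₃ + α₄ - 2 * α₄) (n:ℤ) = 1 := h6 3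
    rwa [show (α₁ + α₂ + α₃ + α₄ - 2 * α₄:ℤ) = α₁ + α₂ + α₃ - α₄ from by ring] at h'
  have f31 : Int.gcd (-α₁ + α₃ + α₄) (n:ℤ) = 1 := by
    have h' : Int.gcd (α₁ + α₂ + α₃ + α₄ - α₂ - 2 * α₁) (n:ℤ) = 1 := h7 0 1 (by decide)
    rwa [show (α₁ + α₂ + α₃ + α₄ - α₂ - 2 * α₁:ℤ) = -α₁ + α₃ + α₄ from by ring] at h'
  have f32 : Int.gcd (-α₁ + α₂ + α₄) (n:ℤ) = 1 := by
    have h' : Int.gcd (α₁ + α₂ + α₃ + α₄ - α₃ - 2 * α₁) (n:ℤ) = 1 := h7 0 2 (by decide)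
    rwa [show (α₁ + α₂ + α₃ + α₄ - α₃ - 2 * α₁:ℤ) = -α₁ + α₂ + α₄ from by ring] at h'
  have f33 : Int.gcd (-α₁ + α₂ + α₃) (n:ℤ) = 1 := by
    have h' : Int.gcd (α₁ + α₂ + α₃ + α₄ - α₄ - 2 * α₁) (n:ℤ) = 1 := h7 0 3 (by decide)
    rwa [show (α₁ + α₂ + α₃ + α₄ - α₄ - 2 * α₁:ℤ) = -α₁ + α₂ + α₃ from by ring] at h'
  have f34 : Int.gcd (-α₂ + α₃ + α₄) (n:ℤ) = 1 := by
    have h' : Int.gcd (α₁ + α₂ + α₃ + α₄ - α₁ - 2 * α₂) (n:ℤ) = 1 := h7 1 0 (by decide)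
    rwa [show (α₁ + α₂ + α₃ + α₄ - α₁ - 2 * α₂:ℤ) = -α₂ + α₃ + α₄ from by ring] at h'
  have f35 : Int.gcd (α₁ - α₂ + α₄) (n:ℤ) = 1 := by
    have h' : Int.gcd (α₁ + α₂ + α₃ + α₄ - α₃ - 2 * α₂) (n:ℤ) = 1 := h7 1 2 (by decide)
    rwa [show (α₁ + α₂ + α₃ + α₄ - α₃ - 2 * α₂:ℤ) = α₁ - α₂ + α₄ from by ring] at h'
  have f36 : Int.gcd (α₁ - α₂ + α₃) (n:ℤ) = 1 := by
    have h' : Int.gcd (α₁ + α₂ + α₃ + α₄ - α₄ - 2 * α₂) (n:ℤ) = 1 := h7 1 3 (by decide)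
    rwa [show (α₁ + α₂ + α₃ + α₄ - α₄ - 2 * α₂:ℤ) = α₁ - α₂ + α₃ from by ring] at h'
  have f37 : Int.gcd (α₂ - α₃ + α₄) (n:ℤ) = 1 := by
    have h' : Int.gcd (α₁ + α₂ + α₃ + α₄ - α₁ - 2 * α₃) (n:ℤ) = 1 := h7 2 0 (by decide)
    rwa [show (α₁ + α₂ + α₃ + α₄ - α₁ - 2 * α₃:ℤ) = α₂ - α₃ + α₄ from by ring] at h'
  have f38 : Int.gcd (α₁ - α₃ + α₄) (n:ℤ) = 1 := by
    have h' : Int.gcd (α₁ + α₂ + α₃ + α₄ - α₂ - 2 * α₃) (n:ℤ) = 1 := h7 2 1 (by decide)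
    rwa [show (α₁ + α₂ + α₃ + α₄ - α₂ - 2 * α₃:ℤ) = α₁ - α₃ + α₄ from by ring] at h'
  have f39 : Int.gcd (α₁ + α₂ - α₃) (n:ℤ) = 1 := by
    have h' : Int.gcd (α₁ + α₂ + α₃ + α₄ - α₄ - 2 * α₃) (n:ℤ) = 1 := h7 2 3 (by decide)
    rwa [show (α₁ + α₂ + α₃ + α₄ - α₄ - 2 * α₃:ℤ) = α₁ + α₂ - α₃ from by ring] at h'
  have f40 : Int.gcd (α₂ + α₃ - α₄) (n:ℤ) = 1 := by
    have h' : Int.gcd (α₁ + α₂ + α₃ + α₄ - α₁ - 2 * α₄) (n:ℤ) = 1 := h7 3 0 (by decide)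
    rwa [show (α₁ + α₂ + α₃ + α₄ - α₁ - 2 * α₄:ℤ) = α₂ + α₃ - α₄ from by ring] at h'
  have f41 : Int.gcd (α₁ + α₃ - α₄) (n:ℤ) = 1 := by
    have h' : Int.gcd (α₁ + α₂ + α₃ + α₄ - α₂ - 2 * α₄) (n:ℤ) = 1 := h7 3 1 (by decide)
    rwa [show (α₁ + α₂ + α₃ + α₄ - α₂ - 2 * α₄:ℤ) = α₁ + α₃ - α₄ from by ring] at h'
  have f42 : Int.gcd (α₁ + α₂ - α₄) (n:ℤ) = 1 := by
    have h' : Int.gcd (α₁ + α₂ + α₃ + α₄ - α₃ - 2 * α₄) (n:ℤ) = 1 := h7 3 2 (by decide)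
    rwa [show (α₁ + α₂ + α₃ + α₄ - α₃ - 2 * α₄:ℤ) = α₁ + α₂ - α₄ from by ring] at h'
  have f43 : Int.gcd (-α₁ - α₂ + α₃ + α₄) (n:ℤ) = 1 := by
    have h' : Int.gcd (α₁ + α₂ + α₃ + α₄ - 2 * α₁ - 2 * α₂) (n:ℤ) = 1 := h8 1 0 (by decide)
    rwa [show (α₁ + α₂ + α₃ + α₄ - 2 * α₁ - 2 * α₂:ℤ) = -α₁ - α₂ + α₃ + α₄ from by ring] at h'
  have f44 : Int.gcd (-α₁ + α₂ - α₃ + α₄) (n:ℤ) = 1 := by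
    have h' : Int.gcd (α₁ + α₂ + α₃ + α₄ - 2 * α₁ - 2 * α₃) (n:ℤ) = 1 := h8 2 0 (by decide)
    rwa [show (α₁ + α₂ + α₃ + α₄ - 2 * α₁ - 2 * α₃:ℤ) = -α₁ + α₂ - α₃ + α₄ from by ring] at h'
  have f45 : Int.gcd (-α₁ + α₂ + α₃ - α₄) (n:ℤ) = 1 := by
    have h' : Int.gcd (α₁ + α₂ + α₃ + α₄ - 2 * α₁ - 2 * α₄) (n:ℤ) = 1 := h8 3 0 (by decide)
    rwa [show (α₁ + α₂ + α₃ + α₄ - 2 * α₁ - 2 * α₄:ℤ) = -α₁ + α₂ + α₃ - α₄ from by ring] at h'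
  have f46 : Int.gcd (α₁ - α₂ - α₃ + α₄) (n:ℤ) = 1 := by
    have h' : Int.gcd (α₁ + α₂ + α₃ + α₄ - 2 * α₂ - 2 * α₃) (n:ℤ) = 1 := h8 2 1 (by decide)
    rwa [show (α₁ + α₂ + α₃ + α₄ - 2 * α₂ - 2 * α₃:ℤ) = α₁ - α₂ - α₃ + α₄ from by ring] at h'
  have f47 : Int.gcd (α₁ - α₂ + α₃ - α₄) (n:ℤ) = 1 := by
    have h' : Int.gcd (α₁ + α₂ + α₃ + α₄ - 2 * α₂ - 2 * α₄) (n:ℤ) = 1 := h8 3 1 (by decide)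
    rwa [show (α₁ + α₂ + α₃ + α₄ - 2 * α₂ - 2 * α₄:ℤ) = α₁ - α₂ + α₃ - α₄ from by ring] at h'
  have f48 : Int.gcd (α₁ + α₂ - α₃ - α₄) (n:ℤ) = 1 := by
    have h' : Int.gcd (α₁ + α₂ + α₃ + α₄ - 2 * α₃ - 2 * α₄) (n:ℤ) = 1 := h8 3 2 (by decide)
    rwa [show (α₁ + α₂ + α₃ + α₄ - 2 * α₃ - 2 * α₄:ℤ) = α₁ + α₂ - α₃ - α₄ from by ring] at h'
  rcases he₁ with rfl | rfl | rfl <;> rcases he₂ with rfl | rfl | rfl <;> rcases he₃ with rfl | rfl | rfl <;> rcases he₄ with rfl | rfl | rfl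
  · rw [show (α₁ * (-1) + α₂ * (-1) + α₃ * (-1) + α₄ * (-1) : ℤ) = -(α₁ + α₂ + α₃ + α₄) from by ring, gcd_neg_left]
    exact f22
  · rw [show (α₁ * (-1) + α₂ * (-1) + α₃ * (-1) + α₄ * (0) : ℤ) = -(α₁ + α₂ + α₃) from by ring, gcd_neg_left]
    exact f26
  · rw [show (α₁ * (-1) + α₂ * (-1) + α₃ * (-1) + α₄ * (1) : ℤ) = -(α₁ + α₂ + α₃ - α₄) from by ring, gcd_neg_left]
    exact f30
  · rw [show (α₁ * (-1) + α₂ * (-1) + α₃ * (0) + α₄ * (-1) : ℤ) = -(α₁ + α₂ + α₄) from by ring, gcd_neg_left]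
    exact f25
  · rw [show (α₁ * (-1) + α₂ * (-1) + α₃ * (0) + α₄ * (0) : ℤ) = -(α₁ + α₂) from by ring, gcd_neg_left]
    exact f4
  · rw [show (α₁ * (-1) + α₂ * (-1) + α₃ * (0) + α₄ * (1) : ℤ) = -(α₁ + α₂ - α₄) from by ring, gcd_neg_left]
    exact f42
  · rw [show (α₁ * (-1) + α₂ * (-1) + α₃ * (1) + α₄ * (-1) : ℤ) = -(α₁ + α₂ - α₃ + α₄) from by ring, gcd_neg_left]
    exact f29
  · rw [show (α₁ * (-1) + α₂ * (-1) + α₃ * (1) + α₄ * (0) : ℤ) = -(α₁ + α₂ - α₃) from by ring, gcd_neg_left]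
    exact f39
  · rw [show (α₁ * (-1) + α₂ * (-1) + α₃ * (1) + α₄ * (1) : ℤ) = -α₁ - α₂ + α₃ + α₄ from by ring]
    exact f43
  · rw [show (α₁ * (-1) + α₂ * (0) + α₃ * (-1) + α₄ * (-1) : ℤ) = -(α₁ + α₃ + α₄) from by ring, gcd_neg_left]
    exact f24
  · rw [show (α₁ * (-1) + α₂ * (0) + α₃ * (-1) + α₄ * (0) : ℤ) = -(α₁ + α₃) from by ring, gcd_neg_left]
    exact f5
  · rw [show (α₁ * (-1) + α₂ * (0) + α₃ * (-1) + α₄ * (1) : ℤ) = -(α₁ + α₃ - α₄) from by ring, gcd_neg_left]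
    exact f41
  · rw [show (α₁ * (-1) + α₂ * (0) + α₃ * (0) + α₄ * (-1) : ℤ) = -(α₁ + α₄) from by ring, gcd_neg_left]
    exact f6
  · rw [show (α₁ * (-1) + α₂ * (0) + α₃ * (0) + α₄ * (0) : ℤ) = -(α₁) from by ring, gcd_neg_left]
    exact f0
  · rw [show (α₁ * (-1) + α₂ * (0) + α₃ * (0) + α₄ * (1) : ℤ) = -α₁ + α₄ from by ring]
    exact f19
  · rw [show (α₁ * (-1) + α₂ * (0) + α₃ * (1) + α₄ * (-1) : ℤ) = -(α₁ - α₃ + α₄) from by ring, gcd_neg_left]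
    exact f38
  · rw [show (α₁ * (-1) + α₂ * (0) + α₃ * (1) + α₄ * (0) : ℤ) = -α₁ + α₃ from by ring]
    exact f16
  · rw [show (α₁ * (-1) + α₂ * (0) + α₃ * (1) + α₄ * (1) : ℤ) = -α₁ + α₃ + α₄ from by ring]
    exact f31
  · rw [show (α₁ * (-1) + α₂ * (1) + α₃ * (-1) + α₄ * (-1) : ℤ) = -(α₁ - α₂ + α₃ + α₄) from by ring, gcd_neg_left]
    exact f28
  · rw [show (α₁ * (-1) + α₂ * (1) + α₃ * (-1) + α₄ * (0) : ℤ) = -(α₁ - α₂ + α₃) from by ring, gcd_neg_left]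
    exact f36
  · rw [show (α₁ * (-1) + α₂ * (1) + α₃ * (-1) + α₄ * (1) : ℤ) = -α₁ + α₂ - α₃ + α₄ from by ring]
    exact f44
  · rw [show (α₁ * (-1) + α₂ * (1) + α₃ * (0) + α₄ * (-1) : ℤ) = -(α₁ - α₂ + α₄) from by ring, gcd_neg_left]
    exact f35
  · rw [show (α₁ * (-1) + α₂ * (1) + α₃ * (0) + α₄ * (0) : ℤ) = -α₁ + α₂ from by ring]
    exact f13
  · rw [show (α₁ * (-1) + α₂ * (1) + α₃ * (0) + α₄ * (1) : ℤ) = -α₁ + α₂ + α₄ from by ring]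
    exact f32
  · rw [show (α₁ * (-1) + α₂ * (1) + α₃ * (1) + α₄ * (-1) : ℤ) = -α₁ + α₂ + α₃ - α₄ from by ring]
    exact f45
  · rw [show (α₁ * (-1) + α₂ * (1) + α₃ * (1) + α₄ * (0) : ℤ) = -α₁ + α₂ + α₃ from by ring]
    exact f33
  · rw [show (α₁ * (-1) + α₂ * (1) + α₃ * (1) + α₄ * (1) : ℤ) = -α₁ + α₂ + α₃ + α₄ from by ring]
    exact f27
  · rw [show (α₁ * (0) + α₂ * (-1) + α₃ * (-1) + α₄ * (-1) : ℤ) = -(α₂ + α₃ + α₄) from by ring, gcd_neg_left]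
    exact f23
  · rw [show (α₁ * (0) + α₂ * (-1) + α₃ * (-1) + α₄ * (0) : ℤ) = -(α₂ + α₃) from by ring, gcd_neg_left]
    exact f7
  · rw [show (α₁ * (0) + α₂ * (-1) + α₃ * (-1) + α₄ * (1) : ℤ) = -(α₂ + α₃ - α₄) from by ring, gcd_neg_left]
    exact f40
  · rw [show (α₁ * (0) + α₂ * (-1) + α₃ * (0) + α₄ * (-1) : ℤ) = -(α₂ + α₄) from by ring, gcd_neg_left]
    exact f8
  · rw [show (α₁ * (0) + α₂ * (-1) + α₃ * (0) + α₄ * (0) : ℤ) = -(α₂) from by ring, gcd_neg_left]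
    exact f1
  · rw [show (α₁ * (0) + α₂ * (-1) + α₃ * (0) + α₄ * (1) : ℤ) = -α₂ + α₄ from by ring]
    exact f20
  · rw [show (α₁ * (0) + α₂ * (-1) + α₃ * (1) + α₄ * (-1) : ℤ) = -(α₂ - α₃ + α₄) from by ring, gcd_neg_left]
    exact f37
  · rw [show (α₁ * (0) + α₂ * (-1) + α₃ * (1) + α₄ * (0) : ℤ) = -α₂ + α₃ from by ring]
    exact f17
  · rw [show (α₁ * (0) + α₂ * (-1) + α₃ * (1) + α₄ * (1) : ℤ) = -α₂ + α₃ + α₄ from by ring]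
    exact f34
  · rw [show (α₁ * (0) + α₂ * (0) + α₃ * (-1) + α₄ * (-1) : ℤ) = -(α₃ + α₄) from by ring, gcd_neg_left]
    exact f9
  · rw [show (α₁ * (0) + α₂ * (0) + α₃ * (-1) + α₄ * (0) : ℤ) = -(α₃) from by ring, gcd_neg_left]
    exact f2
  · rw [show (α₁ * (0) + α₂ * (0) + α₃ * (-1) + α₄ * (1) : ℤ) = -α₃ + α₄ from by ring]
    exact f21
  · rw [show (α₁ * (0) + α₂ * (0) + α₃ * (0) + α₄ * (-1) : ℤ) = -(α₄) from by ring, gcd_neg_left]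
    exact f3
  · exact absurd ⟨rfl, rfl, rfl, rfl⟩ hne
  · rw [show (α₁ * (0) + α₂ * (0) + α₃ * (0) + α₄ * (1) : ℤ) = α₄ from by ring]
    exact f3
  · rw [show (α₁ * (0) + α₂ * (0) + α₃ * (1) + α₄ * (-1) : ℤ) = α₃ - α₄ from by ring]
    exact f18
  · rw [show (α₁ * (0) + α₂ * (0) + α₃ * (1) + α₄ * (0) : ℤ) = α₃ from by ring]
    exact f2
  · rw [show (α₁ * (0) + α₂ * (0) + α₃ * (1) + α₄ * (1) : ℤ) = α₃ + α₄ from by ring]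
    exact f9
  · rw [show (α₁ * (0) + α₂ * (1) + α₃ * (-1) + α₄ * (-1) : ℤ) = -(-α₂ + α₃ + α₄) from by ring, gcd_neg_left]
    exact f34
  · rw [show (α₁ * (0) + α₂ * (1) + α₃ * (-1) + α₄ * (0) : ℤ) = α₂ - α₃ from by ring]
    exact f14
  · rw [show (α₁ * (0) + α₂ * (1) + α₃ * (-1) + α₄ * (1) : ℤ) = α₂ - α₃ + α₄ from by ring]
    exact f37
  · rw [show (α₁ * (0) + α₂ * (1) + α₃ * (0) + α₄ * (-1) : ℤ) = α₂ - α₄ from by ring]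
    exact f15
  · rw [show (α₁ * (0) + α₂ * (1) + α₃ * (0) + α₄ * (0) : ℤ) = α₂ from by ring]
    exact f1
  · rw [show (α₁ * (0) + α₂ * (1) + α₃ * (0) + α₄ * (1) : ℤ) = α₂ + α₄ from by ring]
    exact f8
  · rw [show (α₁ * (0) + α₂ * (1) + α₃ * (1) + α₄ * (-1) : ℤ) = α₂ + α₃ - α₄ from by ring]
    exact f40
  · rw [show (α₁ * (0) + α₂ * (1) + α₃ * (1) + α₄ * (0) : ℤ) = α₂ + α₃ from by ring]
    exact f7
  · rw [show (α₁ * (0) + α₂ * (1) + α₃ * (1) + α₄ * (1) : ℤ) = α₂ + α₃ + α₄ from by ring]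
    exact f23
  · rw [show (α₁ * (1) + α₂ * (-1) + α₃ * (-1) + α₄ * (-1) : ℤ) = -(-α₁ + α₂ + α₃ + α₄) from by ring, gcd_neg_left]
    exact f27
  · rw [show (α₁ * (1) + α₂ * (-1) + α₃ * (-1) + α₄ * (0) : ℤ) = -(-α₁ + α₂ + α₃) from by ring, gcd_neg_left]
    exact f33
  · rw [show (α₁ * (1) + α₂ * (-1) + α₃ * (-1) + α₄ * (1) : ℤ) = α₁ - α₂ - α₃ + α₄ from by ring]
    exact f46
  · rw [show (α₁ * (1) + α₂ * (-1) + α₃ * (0) + α₄ * (-1) : ℤ) = -(-α₁ + α₂ + α₄) from by ring, gcd_neg_left]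
    exact f32
  · rw [show (α₁ * (1) + α₂ * (-1) + α₃ * (0) + α₄ * (0) : ℤ) = α₁ - α₂ from by ring]
    exact f10
  · rw [show (α₁ * (1) + α₂ * (-1) + α₃ * (0) + α₄ * (1) : ℤ) = α₁ - α₂ + α₄ from by ring]
    exact f35
  · rw [show (α₁ * (1) + α₂ * (-1) + α₃ * (1) + α₄ * (-1) : ℤ) = α₁ - α₂ + α₃ - α₄ from by ring]
    exact f47
  · rw [show (α₁ * (1) + α₂ * (-1) + α₃ * (1) + α₄ * (0) : ℤ) = α₁ - α₂ + α₃ from by ring]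
    exact f36
  · rw [show (α₁ * (1) + α₂ * (-1) + α₃ * (1) + α₄ * (1) : ℤ) = α₁ - α₂ + α₃ + α₄ from by ring]
    exact f28
  · rw [show (α₁ * (1) + α₂ * (0) + α₃ * (-1) + α₄ * (-1) : ℤ) = -(-α₁ + α₃ + α₄) from by ring, gcd_neg_left]
    exact f31
  · rw [show (α₁ * (1) + α₂ * (0) + α₃ * (-1) + α₄ * (0) : ℤ) = α₁ - α₃ from by ring]
    exact f11
  · rw [show (α₁ * (1) + α₂ * (0) + α₃ * (-1) + α₄ * (1) : ℤ) = α₁ - α₃ + α₄ from by ring]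
    exact f38
  · rw [show (α₁ * (1) + α₂ * (0) + α₃ * (0) + α₄ * (-1) : ℤ) = α₁ - α₄ from by ring]
    exact f12
  · rw [show (α₁ * (1) + α₂ * (0) + α₃ * (0) + α₄ * (0) : ℤ) = α₁ from by ring]
    exact f0
  · rw [show (α₁ * (1) + α₂ * (0) + α₃ * (0) + α₄ * (1) : ℤ) = α₁ + α₄ from by ring]
    exact f6
  · rw [show (α₁ * (1) + α₂ * (0) + α₃ * (1) + α₄ * (-1) : ℤ) = α₁ + α₃ - α₄ from by ring]
    exact f41
  · rw [show (α₁ * (1) + α₂ * (0) + α₃ * (1) + α₄ * (0) : ℤ) = α₁ + α₃ from by ring]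
    exact f5
  · rw [show (α₁ * (1) + α₂ * (0) + α₃ * (1) + α₄ * (1) : ℤ) = α₁ + α₃ + α₄ from by ring]
    exact f24
  · rw [show (α₁ * (1) + α₂ * (1) + α₃ * (-1) + α₄ * (-1) : ℤ) = α₁ + α₂ - α₃ - α₄ from by ring]
    exact f48
  · rw [show (α₁ * (1) + α₂ * (1) + α₃ * (-1) + α₄ * (0) : ℤ) = α₁ + α₂ - α₃ from by ring]
    exact f39
  · rw [show (α₁ * (1) + α₂ * (1) + α₃ * (-1) + α₄ * (1) : ℤ) = α₁ + α₂ - α₃ + α₄ from by ring]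
    exact f29
  · rw [show (α₁ * (1) + α₂ * (1) + α₃ * (0) + α₄ * (-1) : ℤ) = α₁ + α₂ - α₄ from by ring]
    exact f42
  · rw [show (α₁ * (1) + α₂ * (1) + α₃ * (0) + α₄ * (0) : ℤ) = α₁ + α₂ from by ring]
    exact f4
  · rw [show (α₁ * (1) + α₂ * (1) + α₃ * (0) + α₄ * (1) : ℤ) = α₁ + α₂ + α₄ from by ring]
    exact f25
  · rw [show (α₁ * (1) + α₂ * (1) + α₃ * (1) + α₄ * (-1) : ℤ) = α₁ + α₂ + α₃ - α₄ from by ring]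
    exact f30
  · rw [show (α₁ * (1) + α₂ * (1) + α₃ * (1) + α₄ * (0) : ℤ) = α₁ + α₂ + α₃ from by ring]
    exact f26
  · rw [show (α₁ * (1) + α₂ * (1) + α₃ * (1) + α₄ * (1) : ℤ) = α₁ + α₂ + α₃ + α₄ from by ring]
    exact f22
/-- **Theorem 2.7.** For odd `n` and `α₁, α₂, α₃, α₄` satisfying
conditions (2.14), the hypercube `H(i,j,k,ℓ) = α₁i + α₂j + α₃k + α₄ℓ` is a
four-dimensional pandiagonal Latin cube: along every line with direction a nonzero
vector in `{-1,0,1}⁴`, the values of `H` form a bijection of `ZMod n`. -/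
theorem linear_hypercube_is_pandiagonal_latin
    (n : ℕ) (hodd : Odd n) (α₁ α₂ α₃ α₄ : ℤ) (h : Cond214 n α₁ α₂ α₃ α₄) :
    ∀ d₁ d₂ d₃ d₄ : ZMod n,
      d₁ ∈ ({-1, 0, 1} : Set (ZMod n)) →
      d₂ ∈ ({-1, 0, 1} : Set (ZMod n)) →
      d₃ ∈ ({-1, 0, 1} : Set (ZMod n)) →
      d₄ ∈ ({-1, 0, 1} : Set (ZMod n)) →
      ¬ (d₁ = 0 ∧ d₂ = 0 ∧ d₃ = 0 ∧ d₄ = 0) →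
      ∀ p₁ p₂ p₃ p₄ : ZMod n,
        Function.Bijective (fun t : ZMod n =>
          (α₁ : ZMod n) * (p₁ + t * d₁) + (α₂ : ZMod n) * (p₂ + t * d₂) +
            (α₃ : ZMod n) * (p₃ + t * d₃) + (α₄ : ZMod n) * (p₄ + t * d₄)) := by
  intro d₁ d₂ d₃ d₄ hd₁ hd₂ hd₃ hd₄ hne p₁ p₂ p₃ p₄
  haveI : NeZero n := ⟨hodd.pos.ne'⟩
  simp only [Set.mem_insert_iff, Set.mem_singleton_iff] at hd₁ hd₂ hd₃ hd₄
  obtain ⟨e₁, he₁, hc₁⟩ : ∃ e : ℤ, (e = -1 ∨ e = 0 ∨ e = 1) ∧ ((e : ZMod n) = d₁) := by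
    rcases hd₁ with h | h | h
    exacts [⟨-1, Or.inl rfl, by simp [h]⟩, ⟨0, Or.inr (Or.inl rfl), by simp [h]⟩,
      ⟨1, Or.inr (Or.inr rfl), by simp [h]⟩]
  obtain ⟨e₂, he₂, hc₂⟩ : ∃ e : ℤ, (e = -1 ∨ e = 0 ∨ e = 1) ∧ ((e : ZMod n) = d₂) := by
    rcases hd₂ with h | h | h
    exacts [⟨-1, Or.inl rfl, by simp [h]⟩, ⟨0, Or.inr (Or.inl rfl), by simp [h]⟩,
      ⟨1, Or.inr (Or.inr rfl), by simp [h]⟩]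
  obtain ⟨e₃, he₃, hc₃⟩ : ∃ e : ℤ, (e = -1 ∨ e = 0 ∨ e = 1) ∧ ((e : ZMod n) = d₃) := by
    rcases hd₃ with h | h | h
    exacts [⟨-1, Or.inl rfl, by simp [h]⟩, ⟨0, Or.inr (Or.inl rfl), by simp [h]⟩,
      ⟨1, Or.inr (Or.inr rfl), by simp [h]⟩]
  obtain ⟨e₄, he₄, hc₄⟩ : ∃ e : ℤ, (e = -1 ∨ e = 0 ∨ e = 1) ∧ ((e : ZMod n) = d₄) := by
    rcases hd₄ with h | h | h
    exacts [⟨-1, Or.inl rfl, by simp [h]⟩, ⟨0, Or.inr (Or.inl rfl), by simp [h]⟩,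
      ⟨1, Or.inr (Or.inr rfl), by simp [h]⟩]
  have hne' : ¬ (e₁ = 0 ∧ e₂ = 0 ∧ e₃ = 0 ∧ e₄ = 0) := by
    rintro ⟨rfl, rfl, rfl, rfl⟩
    exact hne ⟨by rw [← hc₁]; simp, by rw [← hc₂]; simp, by rw [← hc₃]; simp,
      by rw [← hc₄]; simp⟩
  have hkey := key214 n α₁ α₂ α₃ α₄ h e₁ e₂ e₃ e₄ he₁ he₂ he₃ he₄ hne'
  have hU : IsUnit ((α₁ : ZMod n) * d₁ + (α₂ : ZMod n) * d₂ + (α₃ : ZMod n) * d₃ +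
      (α₄ : ZMod n) * d₄) := by
    obtain ⟨u, v, huv⟩ := Int.isCoprime_iff_gcd_eq_one.mpr hkey
    refine IsUnit.of_mul_eq_one ((u : ℤ) : ZMod n) ?_
    have hcast := congrArg (fun z : ℤ => (z : ZMod n)) huv
    push_cast at hcast
    rw [ZMod.natCast_self] at hcast
    rw [← hc₁, ← hc₂, ← hc₃, ← hc₄]
    linear_combination hcast
  rw [← Finite.injective_iff_bijective]
  intro x y hxy
  simp only at hxy
  have hx : x * ((α₁ : ZMod n) * d₁ + (α₂ : ZMod n) * d₂ + (α₃ : ZMod n) * d₃ +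
      (α₄ : ZMod n) * d₄) = y * ((α₁ : ZMod n) * d₁ + (α₂ : ZMod n) * d₂ +
      (α₃ : ZMod n) * d₃ + (α₄ : ZMod n) * d₄) := by linear_combination hxy
  exact hU.mul_left_cancel (by rw [mul_comm x, mul_comm y] at hx; exact hx)
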